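/- Let I = (0, T*) and let R ⊂ I be open (so R = ⋃_{i∈A} (τ_i, s_i), a countable disjoint union of open intervals). Let IR = I \ R. Suppose there is a constant C > 0 and 5/6 < α < 5/4 such that Σ_{i∈A} (s_i - τ_i)^{(5-4α)/(2α)} ≤ C. Then the (5-4α)/(2α)-dimensional Hausdorff measure of IR is zero, provided IR has Lebesgue measure zero. -/

import Mathlib

open MeasureTheory
open scoped ENNReal NNReal

namespace Stmt9

/-- subadditivity of `x ^ γ` for `tsum` in `ℝ≥0∞`, `0 < γ ≤ 1`. -/
theorem tsum_rpow_le {κ : Type*} (f : κ → ℝ≥0∞) {γ : ℝ} (h0 : 0 < γ) (h1 : γ ≤ 1) :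
    (∑' i, f i) ^ γ ≤ ∑' i, f i ^ γ := by
  classical
  rw [ENNReal.tsum_eq_iSup_sum]
  have hmap : (⨆ t : Finset κ, ∑ i ∈ t, f i) ^ γ
      = ⨆ t : Finset κ, (∑ i ∈ t, f i) ^ γ := by
    have hh := (ENNReal.orderIsoRpow γ h0).map_iSup (fun t : Finset κ => ∑ i ∈ t, f i)
    simp only [ENNReal.orderIsoRpow_apply] at hh
    exact hh
  rw [hmap]
  refine iSup_le fun t => le_trans ?_ (ENNReal.sum_le_tsum t)
  induction t using Finset.induction with
  | empty => simp [ENNReal.zero_rpow_of_pos h0]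
  | insert _ _ h ih =>
      rw [Finset.sum_insert h, Finset.sum_insert h]
      exact le_trans (ENNReal.rpow_add_le_add_rpow _ _ h0.le h1) (by gcongr)

variable {ι : Type*}

/-- right endpoint of the gap piece indexed by `p`. -/
noncomputable def Bf (Tstar : ℝ) (τ : ι → ℝ) (F : Finset ι) (p : Option {j // j ∈ F}) : ℝ :=
  p.elim Tstar fun j => τ j.1

/-- candidate left endpoints of the gap piece. -/
noncomputable def Mf (Tstar : ℝ) (τ s : ι → ℝ) (F : Finset ι) (p : Option {j // j ∈ F}) :
    Finset ℝ := by
  classical exact insert (0 : ℝ) ((F.filter fun i => s i ≤ Bf Tstar τ F p).image s)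

lemma zero_mem_Mf {Tstar : ℝ} {τ s : ι → ℝ} {F : Finset ι} {p : Option {j // j ∈ F}} :
    (0 : ℝ) ∈ Mf Tstar τ s F p := by
  classical simp [Mf]

lemma mem_Mf_iff {Tstar : ℝ} {τ s : ι → ℝ} {F : Finset ι} {p : Option {j // j ∈ F}} {y : ℝ} :
    y ∈ Mf Tstar τ s F p ↔ y = 0 ∨ ∃ i ∈ F, s i ≤ Bf Tstar τ F p ∧ s i = y := by
  classical
  simp [Mf, Finset.mem_insert, Finset.mem_image, Finset.mem_filter, and_assoc]

/-- left endpoint of the gap piece indexed by `p`. -/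
noncomputable def Af (Tstar : ℝ) (τ s : ι → ℝ) (F : Finset ι) (p : Option {j // j ∈ F}) : ℝ :=
  (Mf Tstar τ s F p).max' ⟨0, zero_mem_Mf⟩

lemma Af_nonneg {Tstar : ℝ} {τ s : ι → ℝ} {F : Finset ι} {p : Option {j // j ∈ F}} :
    0 ≤ Af Tstar τ s F p :=
  Finset.le_max' _ 0 zero_mem_Mf

lemma le_Af {Tstar : ℝ} {τ s : ι → ℝ} {F : Finset ι} {p : Option {j // j ∈ F}} {i : ι}
    (hi : i ∈ F) (hs : s i ≤ Bf Tstar τ F p) : s i ≤ Af Tstar τ s F p :=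
  Finset.le_max' _ _ (mem_Mf_iff.mpr (Or.inr ⟨i, hi, hs, rfl⟩))

lemma Af_mem {Tstar : ℝ} {τ s : ι → ℝ} {F : Finset ι} {p : Option {j // j ∈ F}} :
    Af Tstar τ s F p = 0 ∨
      ∃ i ∈ F, s i ≤ Bf Tstar τ F p ∧ s i = Af Tstar τ s F p :=
  mem_Mf_iff.mp (Finset.max'_mem _ _)

lemma Af_le_Bf {Tstar : ℝ} {τ s : ι → ℝ} {F : Finset ι} {p : Option {j // j ∈ F}}
    (hB : 0 ≤ Bf Tstar τ F p) : Af Tstar τ s F p ≤ Bf Tstar τ F p := by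
  refine Finset.max'_le _ _ _ fun y hy => ?_
  rcases mem_Mf_iff.mp hy with rfl | ⟨i, _, hs, rfl⟩
  · exact hB
  · exact hs

end Stmt9

open Stmt9 in
/-- key covering lemma: given a finite subfamily `F`, the singular set is covered by the
`|F| + 1` closed "gap" intervals, whose `γ`-power sum is controlled by the tail. -/
theorem stmt9_cover {ι : Type*} [Countable ι] (γ Tstar : ℝ) (hγ0 : 0 < γ) (hγ1 : γ ≤ 1)
    (hT : 0 < Tstar) (τ s : ι → ℝ) (hts : ∀ i, τ i < s i)
    (hdisj : Pairwise (Function.onFun Disjoint (fun i => Set.Ioo (τ i) (s i))))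
    (hsub : ∀ i, Set.Ioo (τ i) (s i) ⊆ Set.Ioo 0 Tstar)
    (hleb : volume (Set.Ioo 0 Tstar \ ⋃ i, Set.Ioo (τ i) (s i)) = 0)
    (F : Finset ι) :
    ∃ t : Option {j // j ∈ F} → Set ℝ,
      ((Set.Ioo 0 Tstar \ ⋃ i, Set.Ioo (τ i) (s i)) ⊆ ⋃ p, t p) ∧
      ∑ p, EMetric.diam (t p) ^ γ ≤ ∑' i : {x : ι // x ∉ F}, ENNReal.ofReal (s i.1 - τ i.1) ^ γ := by
  classical
  set A := Af Tstar τ s F with hA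
  set B := Bf Tstar τ F with hB
  -- basic facts
  have hbase : ∀ i, 0 ≤ τ i ∧ s i ≤ Tstar := by
    intro i
    have h := hsub i
    rwa [Set.Ioo_subset_Ioo_iff (hts i)] at h
  have hsep : ∀ i j, i ≠ j → τ j < s i → τ i < s j → False := by
    intro i j hij h1 h2
    have hmM : max (τ i) (τ j) < min (s i) (s j) := by
      simp only [max_lt_iff, lt_min_iff]
      exact ⟨⟨hts i, h1⟩, h2, hts j⟩
    obtain ⟨x, hx⟩ := Set.nonempty_Ioo.mpr hmM
    have hx1 : x ∈ Set.Ioo (τ i) (s i) :=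
      ⟨lt_of_le_of_lt (le_max_left _ _) hx.1, lt_of_lt_of_le hx.2 (min_le_left _ _)⟩
    have hx2 : x ∈ Set.Ioo (τ j) (s j) :=
      ⟨lt_of_le_of_lt (le_max_right _ _) hx.1, lt_of_lt_of_le hx.2 (min_le_right _ _)⟩
    exact Set.disjoint_left.mp (hdisj hij) hx1 hx2
  have hBsome : ∀ j : {j // j ∈ F}, B (some j) = τ j.1 := fun j => rfl
  have hBnone : B none = Tstar := rfl
  have hB0 : ∀ p, 0 ≤ B p := by
    rintro (_ | j)
    · exact hT.le
    · exact (hbase j.1).1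
  have hBT : ∀ p, B p ≤ Tstar := by
    rintro (_ | j)
    · exact le_rfl
    · exact (hts j.1).le.trans (hbase j.1).2
  have hBltT : ∀ j : {j // j ∈ F}, B (some j) < Tstar := fun j =>
    lt_of_lt_of_le (hts j.1) (hbase j.1).2
  have hA0 : ∀ p, 0 ≤ A p := fun p => Af_nonneg
  have hAB : ∀ p, A p ≤ B p := fun p => Af_le_Bf (hB0 p)
  have hBinj : ∀ p q, B p = B q → p = q := by
    rintro (_ | j) (_ | k) h
    · rfl
    · exact absurd h.symm (ne_of_lt (hBltT k))
    · exact absurd h (ne_of_lt (hBltT j))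
    · have hjk : j.1 = k.1 := by
        by_contra hne
        have h1 : τ k.1 < s j.1 := by
          rw [hBsome, hBsome] at h; rw [← h]; exact hts j.1
        have h2 : τ j.1 < s k.1 := by
          rw [hBsome, hBsome] at h; rw [h]; exact hts k.1
        exact hsep j.1 k.1 hne h1 h2
      exact congrArg some (Subtype.ext hjk)
  have hBA : ∀ p q, B p < B q → B p ≤ A q := by
    rintro (_ | j) q h
    · exact absurd (lt_of_lt_of_le h (hBT q)) (lt_irrefl Tstar)
    · have hsj : s j.1 ≤ B q := by
        by_contra hlt
        push_neg at hlt
        rcases q with _ | k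
        · exact absurd (hbase j.1).2 (not_le.mpr hlt)
        · have hjk : j.1 ≠ k.1 := by
            intro hh
            rw [hBsome, hBsome, hh] at h
            exact lt_irrefl _ h
          exact hsep j.1 k.1 hjk hlt (lt_trans h (hts k.1))
      exact le_trans (hts j.1).le (le_Af j.2 hsj)
  -- the pieces
  refine ⟨fun p => Set.Icc (A p) (B p), ?_, ?_⟩
  · -- covering
    intro x hx
    obtain ⟨hx1, hx2⟩ := hx
    simp only [Set.mem_iUnion, not_exists] at hx2
    have hx2' : ∀ i, x ∉ Set.Ioo (τ i) (s i) := hx2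
    have key : ∀ p : Option {j // j ∈ F}, x ≤ B p →
        (∀ i ∈ F, x ≤ τ i → B p ≤ τ i) → x ∈ Set.Icc (A p) (B p) := by
      intro p hxB hmin
      refine ⟨?_, hxB⟩
      rcases Af_mem (p := p) with h0 | ⟨i, hiF, hsi, hAi⟩
      · rw [← hA, h0] at *; exact hx1.1.le
      · rw [← hA] at hAi
        rw [← hAi]
        by_contra hlt
        push_neg at hlt
        have hxi : x ≤ τ i := by
          rcases le_or_gt x (τ i) with h | h
          · exact h
          · exact absurd ⟨h, hlt⟩ (hx2' i)
        have := hmin i hiF hxi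
        exact absurd hsi (not_le.mpr (lt_of_le_of_lt this (hts i)))
    set S := F.filter fun j => x ≤ τ j with hS
    by_cases hSne : S.Nonempty
    · obtain ⟨j, hjS, hjmin⟩ := S.exists_min_image τ hSne
      have hjF : j ∈ F := (Finset.mem_filter.mp hjS).1
      refine Set.mem_iUnion.mpr ⟨some ⟨j, hjF⟩, key _ ?_ ?_⟩
      · exact (Finset.mem_filter.mp hjS).2
      · intro i hiF hxi
        exact hjmin i (Finset.mem_filter.mpr ⟨hiF, hxi⟩)
    · refine Set.mem_iUnion.mpr ⟨none, key _ hx1.2.le ?_⟩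
      intro i hiF hxi
      exact absurd ⟨i, Finset.mem_filter.mpr ⟨hiF, hxi⟩⟩ hSne
  · -- the sum bound
    set G : Option {j // j ∈ F} → Set ι :=
      fun p => {i | i ∉ F ∧ (Set.Ioo (τ i) (s i) ∩ Set.Ioo (A p) (B p)).Nonempty} with hG
    have hGlen : ∀ p, ENNReal.ofReal (B p - A p)
        ≤ ∑' i : G p, ENNReal.ofReal (s i.1 - τ i.1) := by
      intro p
      have hsubset : Set.Ioo (A p) (B p) ⊆
          (Set.Ioo 0 Tstar \ ⋃ i, Set.Ioo (τ i) (s i)) ∪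
            ⋃ i : G p, Set.Ioo (τ i.1) (s i.1) := by
        intro x hx
        by_cases hxR : ∃ i, x ∈ Set.Ioo (τ i) (s i)
        · obtain ⟨i, hxi⟩ := hxR
          have hiF : i ∉ F := by
            intro hiF
            by_cases hsB : s i ≤ B p
            · have h1 := le_Af (s := s) hiF hsB
              rw [← hA] at h1
              exact absurd (lt_of_le_of_lt (h1.trans hx.1.le) hxi.2) (lt_irrefl _)
            · push_neg at hsB
              have hτB : τ i < B p := lt_trans hxi.1 hx.2
              rcases p with _ | j
              · exact absurd (hbase i).2 (not_le.mpr hsB)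
              · have hij : i ≠ j.1 := by
                  intro hh
                  rw [hBsome] at hτB
                  rw [hh] at hτB
                  exact lt_irrefl _ hτB
                exact hsep i j.1 hij hsB (lt_trans hτB (hts j.1))
          exact Or.inr (Set.mem_iUnion.mpr ⟨⟨i, hiF, ⟨x, hxi, hx⟩⟩, hxi⟩)
        · push_neg at hxR
          refine Or.inl ⟨⟨lt_of_le_of_lt (hA0 p) hx.1, lt_of_lt_of_le hx.2 (hBT p)⟩, ?_⟩
          simpa using hxR
      calc ENNReal.ofReal (B p - A p) = volume (Set.Ioo (A p) (B p)) := Real.volume_Ioo.symm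
        _ ≤ volume ((Set.Ioo 0 Tstar \ ⋃ i, Set.Ioo (τ i) (s i)) ∪
              ⋃ i : G p, Set.Ioo (τ i.1) (s i.1)) := measure_mono hsubset
        _ ≤ volume (Set.Ioo 0 Tstar \ ⋃ i, Set.Ioo (τ i) (s i)) +
              volume (⋃ i : G p, Set.Ioo (τ i.1) (s i.1)) := measure_union_le _ _
        _ = volume (⋃ i : G p, Set.Ioo (τ i.1) (s i.1)) := by rw [hleb, zero_add]
        _ ≤ ∑' i : G p, volume (Set.Ioo (τ i.1) (s i.1)) := measure_iUnion_le _
        _ = ∑' i : G p, ENNReal.ofReal (s i.1 - τ i.1) := by simp [Real.volume_Ioo]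
    have hGpow : ∀ p, ENNReal.ofReal (B p - A p) ^ γ
        ≤ ∑' i : G p, ENNReal.ofReal (s i.1 - τ i.1) ^ γ := fun p =>
      le_trans (ENNReal.rpow_le_rpow (hGlen p) hγ0.le)
        (Stmt9.tsum_rpow_le _ hγ0 hγ1)
    have hGdisj : ∀ p q, p ≠ q → Disjoint (G p) (G q) := by
      have H : ∀ p q i, B p < B q → i ∈ G p → i ∈ G q → False := by
        intro p q i h hip hiq
        obtain ⟨hpF, u, hu1, hu2⟩ := hip
        obtain ⟨_, v, hv1, hv2⟩ := hiq
        have hBA' := hBA p q h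
        have h1 : τ i < B p := lt_trans hu1.1 hu2.2
        have h2 : B p < s i := lt_of_le_of_lt (le_trans hBA' hv2.1.le) hv1.2
        rcases p with _ | j
        · exact absurd (lt_of_lt_of_le h (hBT q)) (lt_irrefl Tstar)
        · have hij : i ≠ j.1 := fun hh => hpF (hh ▸ j.2)
          exact hsep i j.1 hij h2 (lt_trans h1 (hts j.1))
      intro p q hpq
      rw [Set.disjoint_left]
      intro i hip hiq
      rcases lt_trichotomy (B p) (B q) with h | h | h
      · exact H p q i h hip hiq
      · exact hpq (hBinj p q h)
      · exact H q p i h hiq hip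
    -- assemble
    have hdiam : ∀ p : Option {j // j ∈ F},
        EMetric.diam (Set.Icc (A p) (B p)) = ENNReal.ofReal (B p - A p) := fun p =>
      Real.ediam_Icc _ _
    calc ∑ p, EMetric.diam (Set.Icc (A p) (B p)) ^ γ
        = ∑ p, ENNReal.ofReal (B p - A p) ^ γ := by
          refine Finset.sum_congr rfl fun p _ => by rw [hdiam]
      _ ≤ ∑ p, ∑' i : G p, ENNReal.ofReal (s i.1 - τ i.1) ^ γ :=
          Finset.sum_le_sum fun p _ => hGpow p
      _ = ∑' p : Option {j // j ∈ F}, ∑' i : G p, ENNReal.ofReal (s i.1 - τ i.1) ^ γ :=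
          (tsum_fintype _).symm
      _ = ∑' x : Σ p : Option {j // j ∈ F}, G p, ENNReal.ofReal (s x.2.1 - τ x.2.1) ^ γ :=
          (ENNReal.tsum_sigma _).symm
      _ ≤ ∑' i : {x : ι // x ∉ F}, ENNReal.ofReal (s i.1 - τ i.1) ^ γ := by
          set e : (Σ p : Option {j // j ∈ F}, G p) → {x : ι // x ∉ F} :=
            fun x => ⟨x.2.1, x.2.2.1⟩ with he
          have hinj : Function.Injective e := by
            rintro ⟨p, i, hi⟩ ⟨q, j, hj⟩ h
            have hij : i = j := congrArg Subtype.val h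
            have hpq : p = q := by
              by_contra hpq
              exact Set.disjoint_left.mp (hGdisj p q hpq) hi (hij ▸ hj)
            subst hpq
            exact congrArg _ (Subtype.ext hij)
          exact ENNReal.tsum_comp_le_tsum_of_injective hinj
            (fun i => ENNReal.ofReal (s i.1 - τ i.1) ^ γ)

theorem stmt_9 {ι : Type*} [Countable ι] (α Tstar C : ℝ)
    (hα1 : 5 / 6 < α) (hα2 : α < 5 / 4) (hT : 0 < Tstar) (hC : 0 < C)
    (τ s : ι → ℝ) (hts : ∀ i, τ i < s i)
    (hdisj : Pairwise (Function.onFun Disjoint (fun i => Set.Ioo (τ i) (s i))))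
    (hsub : ∀ i, Set.Ioo (τ i) (s i) ⊆ Set.Ioo 0 Tstar)
    (hsum : Summable (fun i => (s i - τ i) ^ ((5 - 4 * α) / (2 * α))))
    (hbound : (∑' i, (s i - τ i) ^ ((5 - 4 * α) / (2 * α))) ≤ C)
    (hleb : volume (Set.Ioo 0 Tstar \ ⋃ i, Set.Ioo (τ i) (s i)) = 0) :
    μH[(5 - 4 * α) / (2 * α)] (Set.Ioo 0 Tstar \ ⋃ i, Set.Ioo (τ i) (s i)) = 0 := by
  classical
  set γ := (5 - 4 * α) / (2 * α) with hγ
  have hα0 : 0 < α := by linarith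
  have hγ0 : 0 < γ := div_pos (by linarith) (by linarith)
  have hγ1 : γ ≤ 1 := by
    rw [hγ, div_le_one (by linarith)]
    linarith
  set f : ι → ℝ≥0∞ := fun i => ENNReal.ofReal (s i - τ i) ^ γ with hf
  have hfval : ∀ i, f i = ENNReal.ofReal ((s i - τ i) ^ γ) := fun i =>
    ENNReal.ofReal_rpow_of_nonneg (by linarith [hts i]) hγ0.le
  have hfsum : ∑' i, f i ≠ ∞ := by
    rw [tsum_congr hfval, ← ENNReal.ofReal_tsum_of_nonneg
      (fun i => Real.rpow_nonneg (by linarith [hts i]) γ) hsum]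
    exact ENNReal.ofReal_ne_top
  have htail := ENNReal.tendsto_tsum_compl_atTop_zero hfsum
  -- radii
  set r : ℕ → ℝ≥0∞ := fun n => (1 / 2 : ℝ≥0∞) ^ n with hr
  have hrt : Filter.Tendsto r Filter.atTop (nhds 0) :=
    ENNReal.tendsto_pow_atTop_nhds_zero_of_lt_one (by norm_num)
  set b : ℕ → ℝ≥0∞ := fun n => r n ^ γ with hb
  have hb0 : ∀ n, 0 < b n := by
    intro n
    refine ENNReal.rpow_pos (ENNReal.pow_pos (by norm_num) n) ?_
    exact ENNReal.pow_ne_top (by norm_num)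
  have hbt : Filter.Tendsto b Filter.atTop (nhds 0) := by
    have hbeq : b = fun n => ((1 / 2 : ℝ≥0∞) ^ γ) ^ n := by
      funext n
      show ((1 / 2 : ℝ≥0∞) ^ n) ^ γ = ((1 / 2 : ℝ≥0∞) ^ γ) ^ n
      rw [← ENNReal.rpow_natCast ((1:ℝ≥0∞)/2) n, ← ENNReal.rpow_mul, mul_comm,
        ENNReal.rpow_mul, ENNReal.rpow_natCast]
    rw [hbeq]
    refine ENNReal.tendsto_pow_atTop_nhds_zero_of_lt_one ?_
    exact ENNReal.rpow_lt_one (by norm_num) hγ0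
  -- choose finite families
  have hFex : ∀ n : ℕ, ∃ F : Finset ι, (∑' i : {x : ι // x ∉ F}, f i) < b n := fun n =>
    (htail.eventually_lt_const (hb0 n)).exists
  choose Fn hFn using hFex
  have hcov : ∀ n : ℕ, ∃ t : Option {j // j ∈ Fn n} → Set ℝ,
      ((Set.Ioo 0 Tstar \ ⋃ i, Set.Ioo (τ i) (s i)) ⊆ ⋃ p, t p) ∧
      ∑ p, EMetric.diam (t p) ^ γ ≤ ∑' i : {x : ι // x ∉ Fn n}, f i := fun n =>
    stmt9_cover γ Tstar hγ0 hγ1 hT τ s hts hdisj hsub hleb (Fn n)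
  choose t ht1 ht2 using hcov
  have hsum_le : ∀ n, ∑ p, EMetric.diam (t n p) ^ γ ≤ b n := fun n =>
    (ht2 n).trans (hFn n).le
  have hdiam : ∀ n (p : Option {j // j ∈ Fn n}), EMetric.diam (t n p) ≤ r n := by
    intro n p
    have h1 : EMetric.diam (t n p) ^ γ ≤ r n ^ γ := by
      refine le_trans ?_ (hsum_le n)
      exact Finset.single_le_sum (f := fun p => EMetric.diam (t n p) ^ γ)
        (fun _ _ => zero_le) (Finset.mem_univ p)
    exact (ENNReal.rpow_le_rpow_iff hγ0).mp h1
  have hmain := MeasureTheory.Measure.hausdorffMeasure_le_liminf_sum γ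
    (Set.Ioo 0 Tstar \ ⋃ i, Set.Ioo (τ i) (s i)) r hrt t
    (Filter.Eventually.of_forall hdiam) (Filter.Eventually.of_forall ht1)
  have hlim : Filter.Tendsto (fun n => ∑ p, EMetric.diam (t n p) ^ γ)
      Filter.atTop (nhds 0) :=
    tendsto_of_tendsto_of_tendsto_of_le_of_le tendsto_const_nhds hbt
      (fun n => zero_le) hsum_le
  rw [show Filter.liminf (fun n => ∑ i, Metric.ediam (t n i) ^ γ) Filter.atTop = 0 from hlim.liminf_eq] at hmain
  exact le_antisymm hmain zero_le
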